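/- A permutation π of {1,...,n} avoids the pattern 312 if and only if its monotone triangle is gapless, where the monotone triangle of π has i-th row equal to the sorted set {π(1), π(2), ..., π(i)}. -/

import Mathlib

def Contains {n k : ℕ} (σ : Equiv.Perm (Fin n)) (π : Equiv.Perm (Fin k)) : Prop :=
  ∃ f : Fin k → Fin n, StrictMono f ∧ ∀ a b : Fin k, π a < π b ↔ σ (f a) < σ (f b)

def Avoids {n k : ℕ} (σ : Equiv.Perm (Fin n)) (π : Equiv.Perm (Fin k)) : Prop :=
  ¬ Contains σ π

/-- The triangle is gapless: the entries of each column form an interval of integers. -/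
def Gapless (n : ℕ) (t : ℕ → ℕ → ℕ) : Prop :=
  ∀ j c, j < n → (∃ i, j ≤ i ∧ i < n ∧ t i j ≤ c) → (∃ i, j ≤ i ∧ i < n ∧ c ≤ t i j) →
    ∃ i, j ≤ i ∧ i < n ∧ t i j = c

/-- The monotone triangle of a permutation `π` of size `n`: its `i`-th row (0-based) is
the increasing rearrangement of the 1-based values `π(1), …, π(i+1)`; entries outside the
triangle are `0`. -/
noncomputable def triOf {n : ℕ} (π : Equiv.Perm (Fin n)) : ℕ → ℕ → ℕ :=
  fun i j =>
    if i < n ∧ j ≤ i then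
      (((Finset.univ.filter (fun k : Fin n => (k : ℕ) ≤ i)).image
          (fun k : Fin n => (π k : ℕ) + 1)).sort (· ≤ ·)).getD j 0
    else 0

lemma cardFinLe {N j : ℕ} (hj : j < N) :
    (Finset.univ.filter (fun k : Fin N => (k : ℕ) ≤ j)).card = j + 1 := by
  have himg : (Finset.univ.filter (fun k : Fin N => (k : ℕ) ≤ j)).image Fin.val
      = Finset.range (j + 1) := by
    ext m
    simp only [Finset.mem_image, Finset.mem_filter, Finset.mem_univ, true_and,
      Finset.mem_range, Nat.lt_succ_iff]
    constructor
    · rintro ⟨k, hk, rfl⟩; exact hk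
    · intro hm; exact ⟨⟨m, lt_of_le_of_lt hm hj⟩, hm, rfl⟩
  rw [← Finset.card_image_of_injective _ Fin.val_injective, himg, Finset.card_range]

namespace Tri
variable {n : ℕ} (π : Equiv.Perm (Fin n))

def Tset (i : ℕ) : Finset ℕ :=
  (Finset.univ.filter (fun k : Fin n => (k : ℕ) ≤ i)).image (fun k : Fin n => (π k : ℕ) + 1)

lemma gInj : Function.Injective (fun k : Fin n => (π k : ℕ) + 1) := by
  intro a b h
  simp only [add_left_inj] at h
  exact π.injective (Fin.val_injective h)

lemma mem_Tset {i y : ℕ} : y ∈ Tset π i ↔ ∃ k : Fin n, (k : ℕ) ≤ i ∧ (π k : ℕ) + 1 = y := by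
  simp [Tset]

lemma Tset_mono {i i' : ℕ} (h : i ≤ i') : Tset π i ⊆ Tset π i' := by
  intro y hy
  rw [mem_Tset] at hy ⊢
  obtain ⟨k, hk, rfl⟩ := hy
  exact ⟨k, le_trans hk h, rfl⟩

lemma card_Tset {i : ℕ} (hi : i < n) : (Tset π i).card = i + 1 := by
  rw [Tset, Finset.card_image_of_injective _ (gInj π), cardFinLe hi]

lemma tri_eq {i j : ℕ} (hj : j ≤ i) (hi : i < n) :
    triOf π i j = (Tset π i).orderEmbOfFin (card_Tset π hi) ⟨j, by omega⟩ := by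
  rw [triOf, if_pos ⟨hi, hj⟩, Finset.orderEmbOfFin_apply]
  exact List.getD_eq_getElem _ _
    (by rw [Finset.length_sort]; show j < (Tset π i).card; rw [card_Tset π hi]; omega)

lemma tri_mem {i j : ℕ} (hj : j ≤ i) (hi : i < n) : triOf π i j ∈ Tset π i := by
  rw [tri_eq π hj hi]; exact Finset.orderEmbOfFin_mem _ _ _

/-- Master rank characterization. -/
lemma tri_le_iff {i j c : ℕ} (hj : j ≤ i) (hi : i < n) :
    triOf π i j ≤ c ↔ j + 1 ≤ ((Tset π i).filter (· ≤ c)).card := by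
  classical
  set e := (Tset π i).orderEmbOfFin (card_Tset π hi) with he
  rw [tri_eq π hj hi]
  constructor
  · intro h
    have hsub : (Finset.univ.filter (fun m : Fin (i+1) => (m : ℕ) ≤ j)).image e
        ⊆ (Tset π i).filter (· ≤ c) := by
      intro y hy
      simp only [Finset.mem_image, Finset.mem_filter, Finset.mem_univ, true_and] at hy ⊢
      obtain ⟨m, hm, rfl⟩ := hy
      refine ⟨Finset.orderEmbOfFin_mem _ _ _, le_trans ?_ h⟩
      exact e.monotone (by exact hm)
    calc j + 1 = ((Finset.univ.filter (fun m : Fin (i+1) => (m : ℕ) ≤ j)).image e).card := by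
          rw [Finset.card_image_of_injective _ e.injective, cardFinLe (by omega)]
      _ ≤ _ := Finset.card_le_card hsub
  · intro h
    by_contra hc
    push_neg at hc
    have hsub : (Tset π i).filter (· ≤ c)
        ⊆ (Finset.univ.filter (fun m : Fin (i+1) => (m : ℕ) < j)).image e := by
      intro y hy
      simp only [Finset.mem_filter] at hy
      obtain ⟨hy1, hy2⟩ := hy
      have : y ∈ Set.range e := by rw [Finset.range_orderEmbOfFin]; exact hy1
      obtain ⟨m, rfl⟩ := this
      have hlt : m < (⟨j, by omega⟩ : Fin (i+1)) :=
        e.strictMono.lt_iff_lt.mp (lt_of_le_of_lt hy2 hc)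
      simp only [Finset.mem_image, Finset.mem_filter, Finset.mem_univ, true_and]
      exact ⟨m, hlt, rfl⟩
    have hle := Finset.card_le_card hsub
    have h2 : ((Finset.univ.filter (fun m : Fin (i+1) => (m : ℕ) < j)).image e).card ≤ j := by
      calc _ ≤ (Finset.univ.filter (fun m : Fin (i+1) => (m : ℕ) < j)).card :=
            Finset.card_image_le
        _ ≤ j := by
            have himg : (Finset.univ.filter (fun k : Fin (i+1) => (k : ℕ) < j)).image Fin.val
                ⊆ Finset.range j := by
              intro m
              simp only [Finset.mem_image, Finset.mem_filter, Finset.mem_univ, true_and,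
                Finset.mem_range]
              rintro ⟨k, hk, rfl⟩; exact hk
            calc _ = ((Finset.univ.filter
                  (fun k : Fin (i+1) => (k : ℕ) < j)).image Fin.val).card :=
                  (Finset.card_image_of_injective _ Fin.val_injective).symm
              _ ≤ (Finset.range j).card := Finset.card_le_card himg
              _ = j := Finset.card_range j
    omega

lemma mono_col {i i' j : ℕ} (hj : j ≤ i) (hii' : i ≤ i') (hi' : i' < n) :
    triOf π i' j ≤ triOf π i j := by
  rw [tri_le_iff π (le_trans hj hii') hi']
  have h1 : j + 1 ≤ ((Tset π i).filter (· ≤ triOf π i j)).card :=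
    (tri_le_iff π hj (lt_of_le_of_lt hii' hi')).mp le_rfl
  exact le_trans h1 (Finset.card_le_card
    (Finset.filter_subset_filter _ (Tset_mono π hii')))

lemma rank_lt_le {i j c : ℕ} (hj : j ≤ i) (hi : i < n) (h : c ≤ triOf π i j) (hc : 1 ≤ c) :
    ((Tset π i).filter (· < c)).card ≤ j := by
  by_contra hcon
  push_neg at hcon
  have hsub : (Tset π i).filter (· < c) ⊆ (Tset π i).filter (· ≤ c - 1) :=
    Finset.monotone_filter_right _ (by intro y hy; omega)
  have h1 : j + 1 ≤ ((Tset π i).filter (· ≤ c - 1)).card :=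
    le_trans hcon (Finset.card_le_card hsub)
  have := (tri_le_iff π hj hi).mpr h1
  omega

lemma tri_uniq {i j c : ℕ} (hj : j ≤ i) (hi : i < n) (hx : c ∈ Tset π i)
    (hcard : ((Tset π i).filter (· < c)).card = j) : triOf π i j = c := by
  classical
  have hc1 : 1 ≤ c := by
    rw [mem_Tset] at hx; obtain ⟨k, _, hk⟩ := hx; omega
  refine le_antisymm ?_ ?_
  · rw [tri_le_iff π hj hi]
    have hsub : insert c ((Tset π i).filter (· < c)) ⊆ (Tset π i).filter (· ≤ c) := by
      intro y hy
      rcases Finset.mem_insert.mp hy with rfl | hy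
      · exact Finset.mem_filter.mpr ⟨hx, le_rfl⟩
      · rcases Finset.mem_filter.mp hy with ⟨h1, h2⟩
        exact Finset.mem_filter.mpr ⟨h1, le_of_lt h2⟩
    have hnot : c ∉ (Tset π i).filter (· < c) := by
      intro h; exact absurd (Finset.mem_filter.mp h).2 (lt_irrefl c)
    have := Finset.card_le_card hsub
    rw [Finset.card_insert_of_notMem hnot, hcard] at this
    exact this
  · by_contra h
    push_neg at h
    have h' : triOf π i j ≤ c - 1 := by omega
    have h1 := (tri_le_iff π hj hi).mp h'
    have hsub : (Tset π i).filter (· ≤ c - 1) ⊆ (Tset π i).filter (· < c) :=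
      Finset.monotone_filter_right _ (by intro y hy; omega)
    have := le_trans h1 (Finset.card_le_card hsub)
    omega

end Tri
namespace Tri
variable {n : ℕ} (π : Equiv.Perm (Fin n))

/-- Direction B: a gap yields a 312 pattern. -/
lemma dirB {j c : ℕ} (hjn : j < n)
    (H1 : ∃ i, j ≤ i ∧ i < n ∧ triOf π i j ≤ c)
    (H2 : ∃ i, j ≤ i ∧ i < n ∧ c ≤ triOf π i j)
    (Hno : ∀ i, j ≤ i → i < n → triOf π i j ≠ c) :
    Contains π ((finRotate 3)⁻¹) := by
  classical
  obtain ⟨i1, hji1, hi1n, ht1⟩ := H1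
  obtain ⟨i2, hji2, hi2n, ht2⟩ := H2
  have ht1' : triOf π i1 j < c := lt_of_le_of_ne ht1 (Hno i1 hji1 hi1n)
  have ht2' : c < triOf π i2 j := lt_of_le_of_ne ht2 (fun h => Hno i2 hji2 hi2n h.symm)
  have hi21 : i2 < i1 := by
    by_contra h
    push_neg at h
    have := mono_col π hji1 h hi2n
    omega
  set S := (Finset.range i1).filter (fun i => j ≤ i ∧ c < triOf π i j) with hS
  have hSne : S.Nonempty :=
    ⟨i2, Finset.mem_filter.mpr ⟨Finset.mem_range.mpr hi21, hji2, ht2'⟩⟩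
  set i := S.max' hSne with hi
  have hiS : i ∈ S := S.max'_mem hSne
  have hii1 : i < i1 := Finset.mem_range.mp (Finset.mem_filter.mp hiS).1
  have hji : j ≤ i := (Finset.mem_filter.mp hiS).2.1
  have htic : c < triOf π i j := (Finset.mem_filter.mp hiS).2.2
  have hin : i < n := lt_trans hii1 hi1n
  have hi1n' : i + 1 < n := by omega
  have hji' : j ≤ i + 1 := by omega
  have hts : triOf π (i+1) j < c := by
    rcases eq_or_lt_of_le (Nat.succ_le_of_lt hii1) with h | h
    · have hh : i + 1 = i1 := h
      rw [hh]; exact ht1'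
    · have hnotS : i + 1 ∉ S := fun hmem => by
        have := S.le_max' _ hmem; omega
      have hle : ¬ (c < triOf π (i+1) j) := fun hcc => hnotS
        (Finset.mem_filter.mpr ⟨Finset.mem_range.mpr h, hji', hcc⟩)
      push_neg at hle
      exact lt_of_le_of_ne hle (Hno (i+1) hji' hi1n')
  have hA : ((Tset π i).filter (· ≤ c)).card ≤ j := by
    by_contra h
    push_neg at h
    have := (tri_le_iff π hji hin).mpr h
    omega
  have hB : j + 1 ≤ ((Tset π (i+1)).filter (· ≤ c)).card :=
    (tri_le_iff π hji' hi1n').mp (le_of_lt hts)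
  set p : Fin n := ⟨i+1, hi1n'⟩ with hp
  have hpval : (p : ℕ) = i + 1 := rfl
  obtain ⟨x, hxdef⟩ : ∃ x, x = (π p : ℕ) + 1 := ⟨_, rfl⟩
  have hTins : Tset π (i+1) = insert x (Tset π i) := by
    ext y
    rw [Finset.mem_insert, mem_Tset, mem_Tset]
    constructor
    · rintro ⟨k, hk, rfl⟩
      rcases eq_or_lt_of_le hk with h | h
      · left
        have hkp : k = p := Fin.val_injective (by omega)
        rw [hkp, hxdef]
      · right; exact ⟨k, by omega, rfl⟩
    · rintro (rfl | ⟨k, hk, rfl⟩)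
      · exact ⟨p, by omega, hxdef.symm⟩
      · exact ⟨k, by omega, rfl⟩
  have hxnotT : x ∉ Tset π i := by
    rw [mem_Tset]
    rintro ⟨k, hk, hkx⟩
    have hkp : k = p := gInj π (by show (π k : ℕ) + 1 = (π p : ℕ) + 1; omega)
    rw [hkp] at hk
    omega
  have hxc : x ≤ c := by
    by_contra h
    push_neg at h
    have hsub : (Tset π (i+1)).filter (· ≤ c) ⊆ (Tset π i).filter (· ≤ c) := by
      intro y hy
      rcases Finset.mem_filter.mp hy with ⟨hy1, hy2⟩
      rw [hTins, Finset.mem_insert] at hy1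
      rcases hy1 with rfl | hy1
      · omega
      · exact Finset.mem_filter.mpr ⟨hy1, hy2⟩
    have := Finset.card_le_card hsub
    omega
  have hcnot : c ∉ Tset π (i+1) := by
    intro hcT
    have hkey : ((Tset π (i+1)).filter (· < c)).card = j := by
      have hge : j ≤ ((Tset π (i+1)).filter (· < c)).card := by
        have hsub : (Tset π (i+1)).filter (· ≤ c)
            ⊆ insert c ((Tset π (i+1)).filter (· < c)) := by
          intro y hy
          rcases Finset.mem_filter.mp hy with ⟨hy1, hy2⟩
          rcases eq_or_lt_of_le hy2 with rfl | hy2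
          · exact Finset.mem_insert_self _ _
          · exact Finset.mem_insert_of_mem (Finset.mem_filter.mpr ⟨hy1, hy2⟩)
        have h1 := Finset.card_le_card hsub
        have h2 := Finset.card_insert_le c ((Tset π (i+1)).filter (· < c))
        omega
      rcases eq_or_lt_of_le hxc with rfl | hxc'
      · have hle : ((Tset π (i+1)).filter (· < x)).card ≤ j := by
          have hsub : (Tset π (i+1)).filter (· < x) ⊆ (Tset π i).filter (· ≤ x) := by
            intro y hy
            rcases Finset.mem_filter.mp hy with ⟨hy1, hy2⟩
            rw [hTins, Finset.mem_insert] at hy1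
            rcases hy1 with rfl | hy1
            · omega
            · exact Finset.mem_filter.mpr ⟨hy1, le_of_lt hy2⟩
          exact le_trans (Finset.card_le_card hsub) hA
        omega
      · have hcTi : c ∈ Tset π i := by
          rw [hTins, Finset.mem_insert] at hcT
          rcases hcT with rfl | h
          · omega
          · exact h
        have hle : ((Tset π (i+1)).filter (· < c)).card ≤ j := by
          have hsub1 : (Tset π (i+1)).filter (· < c)
              ⊆ insert x ((Tset π i).filter (· < c)) := by
            intro y hy
            rcases Finset.mem_filter.mp hy with ⟨hy1, hy2⟩
            rw [hTins, Finset.mem_insert] at hy1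
            rcases hy1 with rfl | hy1
            · exact Finset.mem_insert_self _ _
            · exact Finset.mem_insert_of_mem (Finset.mem_filter.mpr ⟨hy1, hy2⟩)
          have hsub2 : insert c ((Tset π i).filter (· < c)) ⊆ (Tset π i).filter (· ≤ c) := by
            intro y hy
            rcases Finset.mem_insert.mp hy with rfl | hy
            · exact Finset.mem_filter.mpr ⟨hcTi, le_rfl⟩
            · rcases Finset.mem_filter.mp hy with ⟨h1, h2⟩
              exact Finset.mem_filter.mpr ⟨h1, le_of_lt h2⟩
          have hxnotf : x ∉ (Tset π i).filter (· < c) :=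
            fun h => hxnotT (Finset.mem_filter.mp h).1
          have hcnotf : c ∉ (Tset π i).filter (· < c) :=
            fun h => absurd (Finset.mem_filter.mp h).2 (lt_irrefl c)
          have h1 := Finset.card_le_card hsub1
          rw [Finset.card_insert_of_notMem hxnotf] at h1
          have h2 := Finset.card_le_card hsub2
          rw [Finset.card_insert_of_notMem hcnotf] at h2
          omega
        omega
    exact Hno (i+1) hji' hi1n' (tri_uniq π hji' hi1n' hcT hkey)
  have hxc' : x < c := by
    rcases eq_or_lt_of_le hxc with rfl | h
    · exact absurd (by rw [hTins]; exact Finset.mem_insert_self _ _) hcnot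
    · exact h
  have hcn : c < n := by
    have hm := tri_mem π hji hin
    rw [mem_Tset] at hm
    obtain ⟨k, _, hk⟩ := hm
    have := (π k).isLt
    omega
  set e : Fin n := π⁻¹ ⟨c - 1, by omega⟩ with he
  have hπe : (π e : ℕ) + 1 = c := by
    rw [he]
    simp only [Equiv.Perm.inv_def, Equiv.apply_symm_apply]
    omega
  have hei : i + 1 < (e : ℕ) := by
    by_contra h
    push_neg at h
    exact hcnot (by rw [mem_Tset]; exact ⟨e, h, hπe⟩)
  have hEx : ∃ y ∈ Tset π i, ¬ (y ≤ c) := by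
    by_contra h
    push_neg at h
    have hsub : Tset π i ⊆ (Tset π i).filter (· ≤ c) := fun y hy =>
      Finset.mem_filter.mpr ⟨hy, h y hy⟩
    have := Finset.card_le_card hsub
    rw [card_Tset π hin] at this
    omega
  obtain ⟨y, hyT, hyc⟩ := hEx
  rw [mem_Tset] at hyT
  obtain ⟨a', ha'i, ha'y⟩ := hyT
  push_neg at hyc
  have h1 : π p < π e := by rw [Fin.lt_def]; omega
  have h2 : π e < π a' := by rw [Fin.lt_def]; omega
  have hpa : π p < π a' := lt_trans h1 h2
  have hap : a' < p := by rw [Fin.lt_def]; omega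
  have hpe : p < e := by rw [Fin.lt_def]; omega
  have hae : a' < e := lt_trans hap hpe
  refine ⟨![a', p, e], ?_, ?_⟩
  · intro u v huv
    fin_cases u <;> fin_cases v <;>
      simp only [Matrix.cons_val_zero, Matrix.cons_val_one, Matrix.head_cons,
        Matrix.cons_val_two, Matrix.tail_cons] <;>
      first
        | exact absurd huv (by decide)
        | exact hap
        | exact hpe
        | exact hae
  · intro u v
    fin_cases u <;> fin_cases v <;>
      simp only [Matrix.cons_val_zero, Matrix.cons_val_one, Matrix.head_cons,
        Matrix.cons_val_two, Matrix.tail_cons] <;>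
      first
        | exact iff_of_true (by decide) hpa
        | exact iff_of_true (by decide) h1
        | exact iff_of_true (by decide) h2
        | exact iff_of_false (by decide) (lt_irrefl _)
        | exact iff_of_false (by decide) (lt_asymm hpa)
        | exact iff_of_false (by decide) (lt_asymm h1)
        | exact iff_of_false (by decide) (lt_asymm h2)

end Tri
namespace Tri
variable {n : ℕ} (π : Equiv.Perm (Fin n))

lemma dirA (hG : Gapless n (triOf π)) : Avoids π ((finRotate 3)⁻¹) := by
  classical
  rintro ⟨f, hf, hrel⟩
  set a := f 0 with ha0
  set b := f 1 with hb0
  set d := f 2 with hd0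
  have hab : a < b := hf (by decide : (0 : Fin 3) < 1)
  have hbd : b < d := hf (by decide : (1 : Fin 3) < 2)
  have hπbd : π b < π d := (hrel 1 2).mp (by decide)
  have hπda : π d < π a := (hrel 2 0).mp (by decide)
  have habv : (a : ℕ) < (b : ℕ) := Fin.lt_def.mp hab
  have hbdv : (b : ℕ) < (d : ℕ) := Fin.lt_def.mp hbd
  have hπbdv : (π b : ℕ) < (π d : ℕ) := Fin.lt_def.mp hπbd
  have hπdav : (π d : ℕ) < (π a : ℕ) := Fin.lt_def.mp hπda
  set c := (π d : ℕ) + 1 with hc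
  set P := Finset.univ.filter
    (fun k : Fin n => (k : ℕ) ≤ (d : ℕ) ∧ (π k : ℕ) < (π d : ℕ)) with hP
  have hbP : b ∈ P := Finset.mem_filter.mpr ⟨Finset.mem_univ _, le_of_lt hbdv, hπbdv⟩
  have hPne : P.Nonempty := ⟨b, hbP⟩
  have hcard1 : 1 ≤ P.card := Finset.card_pos.mpr hPne
  set j := P.card - 1 with hjdef
  have hj1 : j + 1 = P.card := by omega
  have hgP : (P.image (fun k : Fin n => (π k : ℕ) + 1)).card = j + 1 := by
    rw [Finset.card_image_of_injective _ (gInj π), hj1]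
  have key1 : ∀ i : ℕ, (d : ℕ) ≤ i →
      P.image (fun k : Fin n => (π k : ℕ) + 1) ⊆ (Tset π i).filter (· < c) := by
    intro i hdi y hy
    simp only [Finset.mem_image] at hy
    obtain ⟨k, hk, rfl⟩ := hy
    rcases Finset.mem_filter.mp hk with ⟨-, hkd, hkv⟩
    refine Finset.mem_filter.mpr ⟨?_, ?_⟩
    · rw [mem_Tset]; exact ⟨k, le_trans hkd hdi, rfl⟩
    · show (π k : ℕ) + 1 < c; omega
  have hjd : j ≤ (d : ℕ) := by
    have hsub : P ⊆ Finset.univ.filter (fun k : Fin n => (k : ℕ) ≤ (d : ℕ)) :=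
      Finset.monotone_filter_right _ (fun k _ hk => hk.1)
    have := Finset.card_le_card hsub
    rw [cardFinLe d.isLt] at this
    omega
  have hjn : j < n := lt_of_le_of_lt hjd d.isLt
  have hjc : j + 1 ≤ (π d : ℕ) := by
    have hinj : Function.Injective (fun k : Fin n => (π k : ℕ)) :=
      fun k₁ k₂ h => π.injective (Fin.val_injective h)
    have hcardv : (P.image (fun k : Fin n => (π k : ℕ))).card = j + 1 := by
      rw [Finset.card_image_of_injective _ hinj, hj1]
    have hsub : P.image (fun k : Fin n => (π k : ℕ)) ⊆ Finset.range (π d : ℕ) := by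
      intro m hm
      simp only [Finset.mem_image] at hm
      obtain ⟨k, hk, rfl⟩ := hm
      exact Finset.mem_range.mpr (Finset.mem_filter.mp hk).2.2
    have := Finset.card_le_card hsub
    rw [hcardv, Finset.card_range] at this
    exact this
  have hn : 0 < n := lt_of_le_of_lt (Nat.zero_le _) d.isLt
  -- witness with small value : row n-1
  have W1 : triOf π (n-1) j ≤ c := by
    refine (tri_le_iff π (by omega) (by omega)).mpr ?_
    have hdn : (d : ℕ) ≤ n - 1 := by have := d.isLt; omega
    have hsub2 : (Tset π (n-1)).filter (· < c) ⊆ (Tset π (n-1)).filter (· ≤ c) :=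
      Finset.monotone_filter_right _ (fun y _ hy => le_of_lt hy)
    calc j + 1 = _ := hgP.symm
      _ ≤ _ := Finset.card_le_card (subset_trans (key1 (n-1) hdn) hsub2)
  -- witness with large value : row (max' P) - 1
  set m := P.max' hPne with hm0
  have hmP : m ∈ P := P.max'_mem hPne
  rcases Finset.mem_filter.mp hmP with ⟨-, hmd, hmv⟩
  have hmd' : (m : ℕ) < (d : ℕ) := by
    rcases eq_or_lt_of_le hmd with h | h
    · have hmd2 : m = d := Fin.val_injective h
      rw [hmd2] at hmv
      omega
    · exact h
  have hbm : (b : ℕ) ≤ (m : ℕ) := Fin.le_def.mp (P.le_max' b hbP)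
  have ham : (a : ℕ) < (m : ℕ) := lt_of_lt_of_le habv hbm
  set i := (m : ℕ) - 1 with hidef
  have haP : a ∉ P := by
    intro h
    exact absurd (Finset.mem_filter.mp h).2.2 (by omega)
  have hjm : j ≤ i := by
    have hanot : (a : ℕ) ∉ P.image Fin.val := by
      intro h
      simp only [Finset.mem_image] at h
      obtain ⟨k, hkP, hkval⟩ := h
      exact haP (Fin.val_injective hkval ▸ hkP)
    have hQcard : (insert (a : ℕ) (P.image Fin.val)).card = j + 2 := by
      rw [Finset.card_insert_of_notMem hanot,
        Finset.card_image_of_injective _ Fin.val_injective]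
      omega
    have hQsub : insert (a : ℕ) (P.image Fin.val) ⊆ Finset.range ((m : ℕ) + 1) := by
      intro q hq
      rcases Finset.mem_insert.mp hq with rfl | hq
      · exact Finset.mem_range.mpr (by omega)
      · simp only [Finset.mem_image] at hq
        obtain ⟨k, hkP, rfl⟩ := hq
        exact Finset.mem_range.mpr (by
          have := Fin.le_def.mp (P.le_max' k hkP)
          omega)
    have := Finset.card_le_card hQsub
    rw [hQcard, Finset.card_range] at this
    omega
  have hiN : i < n := by have := m.isLt; omega
  have W2 : c ≤ triOf π i j := by
    by_contra h
    push_neg at h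
    have h' : triOf π i j ≤ (π d : ℕ) := by omega
    have hrk := (tri_le_iff π hjm hiN).mp h'
    have hsub : (Tset π i).filter (· ≤ (π d : ℕ))
        ⊆ (P.erase m).image (fun k : Fin n => (π k : ℕ) + 1) := by
      intro y hy
      rcases Finset.mem_filter.mp hy with ⟨hy1, hy2⟩
      rw [mem_Tset] at hy1
      obtain ⟨k, hk, rfl⟩ := hy1
      refine Finset.mem_image.mpr ⟨k, ?_, rfl⟩
      refine Finset.mem_erase.mpr ⟨?_, Finset.mem_filter.mpr ⟨Finset.mem_univ _, ?_, ?_⟩⟩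
      · intro hkm
        rw [hkm] at hk
        omega
      · omega
      · omega
    have hcard := Finset.card_le_card hsub
    have hcard2 : ((P.erase m).image (fun k : Fin n => (π k : ℕ) + 1)).card ≤ P.card - 1 := by
      refine le_trans Finset.card_image_le ?_
      rw [Finset.card_erase_of_mem hmP]
    omega
  obtain ⟨i0, hji0, hi0n, hti0⟩ := hG j c hjn ⟨n-1, by omega, by omega, W1⟩ ⟨i, hjm, hiN, W2⟩
  have hcT : c ∈ Tset π i0 := hti0 ▸ tri_mem π hji0 hi0n
  have hdi0 : (d : ℕ) ≤ i0 := by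
    rw [mem_Tset] at hcT
    obtain ⟨k, hk, hkc⟩ := hcT
    have hkd : k = d := π.injective (Fin.val_injective (by omega : (π k : ℕ) = (π d : ℕ)))
    rw [hkd] at hk
    exact hk
  have hup : ((Tset π i0).filter (· < c)).card ≤ j :=
    rank_lt_le π hji0 hi0n (le_of_eq hti0.symm) (by omega)
  have hcT' : c ∈ Tset π i0 := hti0 ▸ tri_mem π hji0 hi0n
  have hlo := Finset.card_le_card (key1 i0 hdi0)
  omega

end Tri

/-- A permutation avoids the pattern 312 iff its monotone triangle is gapless. -/
theorem avoids_312_iff_gapless (n : ℕ) (π : Equiv.Perm (Fin n)) :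
    Avoids π ((finRotate 3)⁻¹) ↔ Gapless n (triOf π) := by
  constructor
  · intro hA
    intro j c hjn H1 H2
    by_contra Hno
    push_neg at Hno
    exact hA (Tri.dirB π hjn H1 H2 (fun i hj hi => Hno i hj hi))
  · intro hG
    exact Tri.dirA π hG
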